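/- arXiv:2604.26744 — 3 statements merged into one kernel-verified Lean document; each statement's English description precedes it below -/
import Mathlib

section
/- Marginalising an encoder along a sufficient statistic preserves the relevance term: let p(X|T) be any encoder satisfying C ↔ T ↔ X, let φ be sufficient for C given T, and define q(x|z) := Σ_t p(x|t) p(t|φ=z). Then the marginal distribution of (φ(T),C,X) under p equals p(φ(T),C)·q(X|φ(T)), and hence I_p(X;C) = I_q(X;C) and C ↔ φ(T) ↔ X is Markov under the reduced joint. -/
open scoped BigOperators

/-- Finite-alphabet mutual information of a joint distribution `p` on `A × B`. -/
noncomputable def mi {A B : Type*} [Fintype A] [Fintype B] (p : A → B → ℝ) : ℝ :=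
  ∑ a, ∑ b, p a b * Real.log (p a b / ((∑ b', p a b') * (∑ a', p a' b)))

/-- Finite-alphabet conditional mutual information `I(A;B∣Z)` of a joint on `A × B × Z`. -/
noncomputable def cmi {A B Z : Type*} [Fintype A] [Fintype B] [Fintype Z]
    (p : A → B → Z → ℝ) : ℝ :=
  ∑ z, ∑ a, ∑ b, p a b z *
    Real.log ((p a b z * (∑ a', ∑ b', p a' b' z)) /
      ((∑ b', p a b' z) * (∑ a', p a' b z)))

/-- `A` and `B` are conditionally independent given `Z` (Markov chain `A ↔ Z ↔ B`),
for a joint distribution `p` on `A × B × Z`. -/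
def CondIndep {A B Z : Type*} [Fintype A] [Fintype B] (p : A → B → Z → ℝ) : Prop :=
  ∀ a b z, p a b z * (∑ a', ∑ b', p a' b' z) = (∑ b', p a b' z) * (∑ a', p a' b z)

/-- A stochastic kernel (each row nonnegative and summing to one). -/
def IsKernel {A B : Type*} [Fintype B] (q : A → B → ℝ) : Prop :=
  (∀ a b, 0 ≤ q a b) ∧ ∀ a, ∑ b, q a b = 1

/-- Pull a sum inside an indicator over a fiber. -/
lemma pull_sum {T Y Z : Type*} [Fintype T] [Fintype Y] [DecidableEq Z]
    (φ : T → Z) (f : T → Y → ℝ) (z : Z) :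
    (∑ y, ∑ t, if φ t = z then f t y else 0) =
      ∑ t, if φ t = z then ∑ y, f t y else 0 := by
  rw [Finset.sum_comm]
  refine Finset.sum_congr rfl fun t _ => ?_
  split_ifs <;> simp

/-- Marginalising an encoder along a sufficient statistic
preserves the relevance term: the marginal of `(φ(T),C,X)` under `p` equals
`p(φ(T),C)·q(X∣φ(T))` with `q(x∣z) := Σ_t p(x∣t) p(t∣φ=z)`, hence
`I_p(X;C) = I_q(X;C)` and `C ↔ φ(T) ↔ X` is Markov under the reduced joint. -/
theorem stmt7 {T C X Z : Type*} [Fintype T] [Fintype C] [Fintype X] [Fintype Z]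
    [DecidableEq Z]
    (φ : T → Z) (r : T → C → X → ℝ)
    (hpos : ∀ t c x, 0 ≤ r t c x)
    (hsum : ∑ t, ∑ c, ∑ x, r t c x = 1)
    (hIB : CondIndep (fun c x t => r t c x))
    (hsuff : ∀ t t' c, φ t = φ t' →
      (∑ c', ∑ x, r t' c' x) * (∑ x, r t c x) =
      (∑ c', ∑ x, r t c' x) * (∑ x, r t' c x)) :
    (∀ z c x, (∑ t, if φ t = z then r t c x else 0) =
       (∑ t, if φ t = z then ∑ x', r t c x' else 0) *
       ((∑ t, if φ t = z then ∑ c', r t c' x else 0) /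
        (∑ t, if φ t = z then ∑ c', ∑ x', r t c' x' else 0))) ∧
    mi (fun x c => ∑ t, r t c x) =
      mi (fun x c => ∑ z, (∑ t, if φ t = z then ∑ x', r t c x' else 0) *
        ((∑ t, if φ t = z then ∑ c', r t c' x else 0) /
         (∑ t, if φ t = z then ∑ c', ∑ x', r t c' x' else 0))) ∧
    CondIndep (fun c x z => ∑ t, if φ t = z then r t c x else 0) := by
  classical
  have hr_le_p : ∀ t c x, r t c x ≤ ∑ c', ∑ x', r t c' x' := by
    intro t c x
    calc r t c x ≤ ∑ x', r t c x' :=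
          Finset.single_le_sum (fun x' _ => hpos t c x') (Finset.mem_univ x)
      _ ≤ ∑ c', ∑ x', r t c' x' :=
          Finset.single_le_sum
            (fun c' _ => Finset.sum_nonneg fun x' _ => hpos t c' x') (Finset.mem_univ c)
  have hpx_le : ∀ t x, (∑ c', r t c' x) ≤ ∑ c', ∑ x', r t c' x' := by
    intro t x
    refine Finset.sum_le_sum fun c' _ => ?_
    exact Finset.single_le_sum (fun x' _ => hpos t c' x') (Finset.mem_univ x)
  have key0 : ∀ t t' c x, φ t = φ t' →
      r t c x * (∑ c', ∑ x', r t' c' x') = (∑ x', r t' c x') * (∑ c', r t c' x) := by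
    intro t t' c x h
    by_cases hpt : (∑ c', ∑ x', r t c' x') = 0
    · have h1 : r t c x = 0 := le_antisymm (hpt ▸ hr_le_p t c x) (hpos t c x)
      have h2 : (∑ c', r t c' x) = 0 :=
        le_antisymm (hpt ▸ hpx_le t x) (Finset.sum_nonneg fun c' _ => hpos t c' x)
      rw [h1, h2]; ring
    · apply mul_left_cancel₀ hpt
      have hib := hIB c x t
      simp only at hib
      have hs := hsuff t t' c h
      calc (∑ c', ∑ x', r t c' x') * (r t c x * (∑ c', ∑ x', r t' c' x'))
          = (r t c x * (∑ c', ∑ x', r t c' x')) * (∑ c', ∑ x', r t' c' x') := by ring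
        _ = ((∑ x', r t c x') * (∑ c', r t c' x)) * (∑ c', ∑ x', r t' c' x') := by rw [hib]
        _ = ((∑ c', ∑ x', r t' c' x') * (∑ x', r t c x')) * (∑ c', r t c' x) := by ring
        _ = ((∑ c', ∑ x', r t c' x') * (∑ x', r t' c x')) * (∑ c', r t c' x) := by rw [hs]
        _ = (∑ c', ∑ x', r t c' x') * ((∑ x', r t' c x') * (∑ c', r t c' x)) := by ring
  have key : ∀ z c x,
      (∑ t, if φ t = z then r t c x else 0) *
        (∑ t, if φ t = z then ∑ c', ∑ x', r t c' x' else 0) =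
      (∑ t, if φ t = z then ∑ x', r t c x' else 0) *
        (∑ t, if φ t = z then ∑ c', r t c' x else 0) := by
    intro z c x
    rw [Finset.sum_mul_sum, Finset.sum_mul_sum, Finset.sum_comm]
    refine Finset.sum_congr rfl fun t' _ => Finset.sum_congr rfl fun t _ => ?_
    by_cases h1 : φ t = z <;> by_cases h2 : φ t' = z <;> simp [h1, h2]
    exact key0 t t' c x (h1.trans h2.symm)
  have part1 : ∀ z c x, (∑ t, if φ t = z then r t c x else 0) =
       (∑ t, if φ t = z then ∑ x', r t c x' else 0) *
       ((∑ t, if φ t = z then ∑ c', r t c' x else 0) /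
        (∑ t, if φ t = z then ∑ c', ∑ x', r t c' x' else 0)) := by
    intro z c x
    by_cases hP : (∑ t, if φ t = z then ∑ c', ∑ x', r t c' x' else 0) = 0
    · have h0 : ∀ t ∈ Finset.univ, (if φ t = z then ∑ c', ∑ x', r t c' x' else 0) = 0 :=
        (Finset.sum_eq_zero_iff_of_nonneg (fun t _ => by
          split_ifs
          · exact Finset.sum_nonneg fun c' _ => Finset.sum_nonneg fun x' _ => hpos t c' x'
          · exact le_refl 0)).mp hP
      have hS : (∑ t, if φ t = z then r t c x else 0) = 0 := by
        refine Finset.sum_eq_zero fun t _ => ?_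
        by_cases h : φ t = z
        · simp only [h, if_true]
          have := h0 t (Finset.mem_univ t)
          rw [if_pos h] at this
          exact le_antisymm (this ▸ hr_le_p t c x) (hpos t c x)
        · simp [h]
      rw [hS, hP, div_zero, mul_zero]
    · rw [mul_div_assoc', eq_div_iff hP]
      exact key z c x
  have m1 : ∀ z c, (∑ x', ∑ t, if φ t = z then r t c x' else 0) =
      ∑ t, if φ t = z then ∑ x', r t c x' else 0 := fun z c =>
    pull_sum φ (fun t x' => r t c x') z
  have m2 : ∀ z x, (∑ c', ∑ t, if φ t = z then r t c' x else 0) =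
      ∑ t, if φ t = z then ∑ c', r t c' x else 0 := fun z x =>
    pull_sum φ (fun t c' => r t c' x) z
  have m3 : ∀ z, (∑ c', ∑ x', ∑ t, if φ t = z then r t c' x' else 0) =
      ∑ t, if φ t = z then ∑ c', ∑ x', r t c' x' else 0 := by
    intro z
    have : ∀ c', (∑ x', ∑ t, if φ t = z then r t c' x' else 0) =
        ∑ t, if φ t = z then ∑ x', r t c' x' else 0 := fun c' =>
      pull_sum φ (fun t x' => r t c' x') z
    rw [Finset.sum_congr rfl fun c' _ => this c']
    exact pull_sum φ (fun t c' => ∑ x', r t c' x') z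
  refine ⟨part1, ?_, ?_⟩
  · congr 1
    funext x c
    have : ∀ z, (∑ t, if φ t = z then ∑ x', r t c x' else 0) *
        ((∑ t, if φ t = z then ∑ c', r t c' x else 0) /
         (∑ t, if φ t = z then ∑ c', ∑ x', r t c' x' else 0)) =
        ∑ t, if φ t = z then r t c x else 0 := fun z => (part1 z c x).symm
    rw [Finset.sum_congr rfl fun z _ => this z, Finset.sum_comm]
    simp
  · intro c x z
    simp only []
    rw [m1 z c, m2 z x, m3 z]
    exact key z c x
end

section
/- Lagrangian preservation (one direction): if φ is sufficient for C given T, then for every β ≥ 0, the infimum over encoders p(X|T) (with C ↔ T ↔ X Markov) of I(X;T) − β·I(X;C) is at most the infimum over encoders q(X|Z), Z = φ(T) (with C ↔ Z ↔ X Markov), of I(X;Z) − β·I(X;C). -/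
open scoped BigOperators

/-- The IB Lagrangian `I(X;T) − β·I(X;C)` of an encoder `e = p(X∣T)` for the joint
`p` on `T × C`, computed under the induced joint `p(t,c)·e(x∣t)`. -/
noncomputable def fullLag {T C X : Type*} [Fintype T] [Fintype C] [Fintype X]
    (p : T → C → ℝ) (β : ℝ) (e : T → X → ℝ) : ℝ :=
  mi (fun t x => (∑ c, p t c) * e t x) - β * mi (fun c x => ∑ t, p t c * e t x)

/-- The pushforward joint of `(φ(T), C)`. -/
noncomputable def pushJoint {T C Z : Type*} [Fintype T] [DecidableEq Z]
    (p : T → C → ℝ) (φ : T → Z) (z : Z) (c : C) : ℝ :=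
  ∑ t, if φ t = z then p t c else 0

lemma sum_push {T Z : Type*} [Fintype T] [Fintype Z] [DecidableEq Z]
    (φ : T → Z) (w : T → ℝ) (g : Z → ℝ) :
    ∑ z, (∑ t, if φ t = z then w t else 0) * g z = ∑ t, w t * g (φ t) := by
  simp only [Finset.sum_mul]
  rw [Finset.sum_comm]
  refine Finset.sum_congr rfl fun t _ => ?_
  simp [ite_mul, Finset.sum_ite_eq]

lemma row_reduce {X : Type*} [Fintype X] (a : ℝ) (f m : X → ℝ) :
    ∑ x, (a * f x) * Real.log ((a * f x) / (a * m x))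
      = a * ∑ x, f x * Real.log (f x / m x) := by
  rcases eq_or_ne a 0 with h | h
  · simp [h]
  · rw [Finset.mul_sum]
    refine Finset.sum_congr rfl fun x _ => ?_
    rw [mul_div_mul_left _ _ h]; ring

lemma mi_factor {A X : Type*} [Fintype A] [Fintype X] (w : A → ℝ) (f : A → X → ℝ)
    (m : X → ℝ) (hrow : ∀ a, ∑ x, f a x = 1) (hcol : ∀ x, ∑ a, w a * f a x = m x) :
    mi (fun a x => w a * f a x)
      = ∑ a, w a * ∑ x, f a x * Real.log (f a x / m x) := by
  unfold mi
  refine Finset.sum_congr rfl fun a _ => ?_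
  have h1 : ∑ x', w a * f a x' = w a := by rw [← Finset.mul_sum, hrow, mul_one]
  calc ∑ x, w a * f a x * Real.log (w a * f a x /
          ((∑ x', w a * f a x') * (∑ a', w a' * f a' x)))
      = ∑ x, (w a * f a x) * Real.log ((w a * f a x) / (w a * m x)) := by
        refine Finset.sum_congr rfl fun x _ => ?_
        rw [h1, hcol]
    _ = w a * ∑ x, f a x * Real.log (f a x / m x) := row_reduce _ _ _

lemma mi_nonneg {A B : Type*} [Fintype A] [Fintype B] (p : A → B → ℝ)
    (h0 : ∀ a b, 0 ≤ p a b) (h1 : ∑ a, ∑ b, p a b = 1) : 0 ≤ mi p := by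
  have hA : ∀ a b, p a b ≤ ∑ b', p a b' := fun a b =>
    Finset.single_le_sum (fun b' _ => h0 a b') (Finset.mem_univ b)
  have hB : ∀ a b, p a b ≤ ∑ a', p a' b := fun a b =>
    Finset.single_le_sum (fun a' _ => h0 a' b) (Finset.mem_univ a)
  have key : ∀ a b, p a b - (∑ b', p a b') * (∑ a', p a' b)
      ≤ p a b * Real.log (p a b / ((∑ b', p a b') * (∑ a', p a' b))) := by
    intro a b
    rcases (h0 a b).eq_or_lt with h | h
    · have hA0 : 0 ≤ ∑ b', p a b' := Finset.sum_nonneg fun b' _ => h0 a b'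
      have hB0 : 0 ≤ ∑ a', p a' b := Finset.sum_nonneg fun a' _ => h0 a' b
      rw [← h]; simp; positivity
    · have hAp : 0 < ∑ b', p a b' := lt_of_lt_of_le h (hA a b)
      have hBp : 0 < ∑ a', p a' b := lt_of_lt_of_le h (hB a b)
      have hD : 0 < (∑ b', p a b') * (∑ a', p a' b) := mul_pos hAp hBp
      have hx : 0 < ((∑ b', p a b') * (∑ a', p a' b)) / p a b := div_pos hD h
      have hlog := Real.log_le_sub_one_of_pos hx
      rw [Real.log_div (ne_of_gt hD) (ne_of_gt h)] at hlog
      have hld : (∑ b', p a b') * (∑ a', p a' b) / p a b - 1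
          = ((∑ b', p a b') * (∑ a', p a' b) - p a b) / p a b := by field_simp
      rw [Real.log_div (ne_of_gt h) (ne_of_gt hD)]
      rw [hld] at hlog
      have := mul_le_mul_of_nonneg_left hlog (le_of_lt h)
      rw [mul_div_cancel₀ _ (ne_of_gt h)] at this
      nlinarith
  have hsum2 : ∑ a, ∑ b, ((∑ b', p a b') * (∑ a', p a' b)) = 1 := by
    have hBsum : ∑ b, ∑ a', p a' b = 1 := by rw [Finset.sum_comm]; exact h1
    calc ∑ a, ∑ b, ((∑ b', p a b') * (∑ a', p a' b))
        = ∑ a, (∑ b', p a b') * ∑ b, (∑ a', p a' b) := by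
          refine Finset.sum_congr rfl fun a _ => ?_; rw [Finset.mul_sum]
      _ = ∑ a, (∑ b', p a b') * 1 := by
          refine Finset.sum_congr rfl fun a _ => ?_; rw [hBsum]
      _ = 1 := by simpa using h1
  have : ∑ a, ∑ b, (p a b - (∑ b', p a b') * (∑ a', p a' b)) ≤ mi p := by
    unfold mi
    refine Finset.sum_le_sum fun a _ => Finset.sum_le_sum fun b _ => key a b
  simp only [Finset.sum_sub_distrib, h1, hsum2] at this
  linarith

lemma mi_le_card {A B : Type*} [Fintype A] [Fintype B] (p : A → B → ℝ)
    (h0 : ∀ a b, 0 ≤ p a b) : mi p ≤ Fintype.card B := by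
  have hA : ∀ a b, p a b ≤ ∑ b', p a b' := fun a b =>
    Finset.single_le_sum (fun b' _ => h0 a b') (Finset.mem_univ b)
  have hB : ∀ a b, p a b ≤ ∑ a', p a' b := fun a b =>
    Finset.single_le_sum (fun a' _ => h0 a' b) (Finset.mem_univ a)
  have key : ∀ a b, p a b * Real.log (p a b / ((∑ b', p a b') * (∑ a', p a' b)))
      ≤ p a b * Real.log ((∑ a', p a' b)⁻¹) := by
    intro a b
    rcases (h0 a b).eq_or_lt with h | h
    · rw [← h]; simp
    · have hAp : 0 < ∑ b', p a b' := lt_of_lt_of_le h (hA a b)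
      have hBp : 0 < ∑ a', p a' b := lt_of_lt_of_le h (hB a b)
      refine mul_le_mul_of_nonneg_left ?_ (le_of_lt h)
      refine Real.log_le_log (div_pos h (mul_pos hAp hBp)) ?_
      rw [div_le_iff₀ (mul_pos hAp hBp)]
      calc p a b ≤ ∑ b', p a b' := hA a b
        _ = (∑ a', p a' b)⁻¹ * ((∑ b', p a b') * (∑ a', p a' b)) := by
            field_simp
  have colbound : ∀ b : B, (∑ a, p a b) * Real.log ((∑ a', p a' b)⁻¹) ≤ 1 := by
    intro b
    rcases (Finset.sum_nonneg fun a _ => h0 a b : (0:ℝ) ≤ ∑ a, p a b).eq_or_lt with h | h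
    · rw [← h]; norm_num
    · have hlog := Real.log_le_sub_one_of_pos (inv_pos.mpr h)
      have := mul_le_mul_of_nonneg_left hlog (le_of_lt h)
      rw [mul_sub, mul_inv_cancel₀ (ne_of_gt h)] at this
      linarith [le_of_lt h]
  calc mi p ≤ ∑ a, ∑ b, p a b * Real.log ((∑ a', p a' b)⁻¹) := by
        unfold mi
        exact Finset.sum_le_sum fun a _ => Finset.sum_le_sum fun b _ => key a b
    _ = ∑ b, (∑ a, p a b) * Real.log ((∑ a', p a' b)⁻¹) := by
        rw [Finset.sum_comm]
        exact Finset.sum_congr rfl fun b _ => (Finset.sum_mul _ _ _).symm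
    _ ≤ ∑ _b : B, (1:ℝ) := Finset.sum_le_sum fun b _ => colbound b
    _ = Fintype.card B := by simp

/-- Lagrangian preservation (one direction): if `φ` is sufficient
for `C` given `T`, then for every `β ≥ 0` the infimum of the full IB Lagrangian over
encoders `p(X∣T)` is at most the infimum of the reduced Lagrangian over encoders
`q(X∣Z)` with `Z = φ(T)`. -/
theorem stmt9 {T C Z X : Type*} [Fintype T] [Fintype C] [Fintype Z] [DecidableEq Z]
    [Fintype X] [Nonempty X]
    (φ : T → Z) (p : T → C → ℝ) (β : ℝ) (hβ : 0 ≤ β)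
    (hpos : ∀ t c, 0 ≤ p t c)
    (hsum : ∑ t, ∑ c, p t c = 1)
    (hsuff : CondIndep (fun c t z => if φ t = z then p t c else 0)) :
    sInf {v : ℝ | ∃ e : T → X → ℝ, IsKernel e ∧ v = fullLag p β e} ≤
      sInf {v : ℝ | ∃ f : Z → X → ℝ, IsKernel f ∧ v = fullLag (pushJoint p φ) β f} := by
  set S := {v : ℝ | ∃ e : T → X → ℝ, IsKernel e ∧ v = fullLag p β e} with hS
  set S' := {v : ℝ | ∃ f : Z → X → ℝ, IsKernel f ∧ v = fullLag (pushJoint p φ) β f} with hS'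
  -- S is bounded below
  have hbdd : BddBelow S := by
    refine ⟨-β * Fintype.card X, fun v hv => ?_⟩
    obtain ⟨e, ⟨he0, he1⟩, rfl⟩ := hv
    have h1 : 0 ≤ mi (fun t x => (∑ c, p t c) * e t x) := by
      refine mi_nonneg _ (fun t x => mul_nonneg (Finset.sum_nonneg fun c _ => hpos t c) (he0 t x)) ?_
      calc ∑ t, ∑ x, (∑ c, p t c) * e t x = ∑ t, ∑ c, p t c := by
            refine Finset.sum_congr rfl fun t _ => ?_
            rw [← Finset.mul_sum, he1 t, mul_one]
        _ = 1 := hsum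
    have h2 : mi (fun c x => ∑ t, p t c * e t x) ≤ Fintype.card X :=
      mi_le_card _ fun c x => Finset.sum_nonneg fun t _ => mul_nonneg (hpos t c) (he0 t x)
    have h3 : β * mi (fun c x => ∑ t, p t c * e t x) ≤ β * Fintype.card X :=
      mul_le_mul_of_nonneg_left h2 hβ
    unfold fullLag
    linarith
  -- S' is nonempty
  have hne' : S'.Nonempty := by
    obtain ⟨x0⟩ := ‹Nonempty X›
    classical
    refine ⟨fullLag (pushJoint p φ) β (fun _ x => if x = x0 then 1 else 0),
      fun _ x => if x = x0 then 1 else 0, ⟨fun a b => by positivity, fun a => by simp⟩, rfl⟩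
  -- S' ⊆ S
  have hsub : S' ⊆ S := by
    rintro v ⟨f, ⟨hf0, hf1⟩, rfl⟩
    refine ⟨fun t x => f (φ t) x, ⟨fun t x => hf0 _ x, fun t => hf1 _⟩, ?_⟩
    set pT : T → ℝ := fun t => ∑ c, p t c with hpT
    set pZ : Z → ℝ := fun z => ∑ c, pushJoint p φ z c with hpZdef
    have hpZ : ∀ z, pZ z = ∑ t, if φ t = z then pT t else 0 := by
      intro z
      simp only [hpZdef, pushJoint]
      rw [Finset.sum_comm]
      refine Finset.sum_congr rfl fun t _ => ?_
      split <;> simp_all [hpT]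
    set m : X → ℝ := fun x => ∑ z, pZ z * f z x with hm
    have hcolT : ∀ x, ∑ t, pT t * f (φ t) x = m x := by
      intro x
      rw [hm]
      simp only [hpZ]
      rw [sum_push φ pT (fun z => f z x)]
    have hg : ∀ z, (∑ x, f z x * Real.log (f z x / m x)) =
        (fun z => ∑ x, f z x * Real.log (f z x / m x)) z := fun _ => rfl
    have hmiT : mi (fun t x => pT t * f (φ t) x)
        = mi (fun z x => pZ z * f z x) := by
      rw [mi_factor pT (fun t x => f (φ t) x) m (fun t => hf1 (φ t)) hcolT,
        mi_factor pZ f m hf1 (fun x => rfl)]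
      calc ∑ t, pT t * ∑ x, f (φ t) x * Real.log (f (φ t) x / m x)
          = ∑ z, (∑ t, if φ t = z then pT t else 0) *
              (∑ x, f z x * Real.log (f z x / m x)) :=
            (sum_push φ pT (fun z => ∑ x, f z x * Real.log (f z x / m x))).symm
        _ = ∑ z, pZ z * ∑ x, f z x * Real.log (f z x / m x) := by
            refine Finset.sum_congr rfl fun z _ => ?_
            rw [← hpZ]
    have hmiC : (fun c x => ∑ t, p t c * f (φ t) x)
        = (fun c x => ∑ z, pushJoint p φ z c * f z x) := by
      funext c x
      rw [show (∑ z, pushJoint p φ z c * f z x)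
          = ∑ z, (∑ t, if φ t = z then p t c else 0) * f z x from rfl,
        sum_push φ (fun t => p t c) (fun z => f z x)]
    unfold fullLag
    rw [hmiC, hmiT]
  exact csInf_le_csInf hbdd hne' hsub
end

section
/- Minimiser rigidity: suppose φ is sufficient for C given T and p(X|T) attains the minimum of I(X;T) − β·I(X;C) over IB-feasible encoders for some β ≥ 0. Then I_p(X;T|φ(T)) = 0; equivalently, p(x|t) depends on t only through φ(t) for p-almost every t. -/
open scoped BigOperators

lemma kl_term_ge (a b : ℝ) (ha : 0 ≤ a) (hb : 0 ≤ b) (hab : a ≠ 0 → b ≠ 0) :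
    a - b ≤ a * Real.log (a / b) := by
  rcases eq_or_lt_of_le ha with h | h
  · simp [← h]; linarith
  · have hb' : 0 < b := (hab h.ne').lt_of_le' hb
    have h1 : Real.log (a / b) = - Real.log (b / a) := by
      rw [← Real.log_inv]; congr 1; field_simp
    have h2 : Real.log (b / a) ≤ b / a - 1 := Real.log_le_sub_one_of_pos (div_pos hb' h)
    have h3 : a * (b / a - 1) = b - a := by field_simp
    calc a - b = -(a * (b / a - 1)) := by rw [h3]; ring
      _ ≤ -(a * Real.log (b / a)) := by
          have := mul_le_mul_of_nonneg_left h2 h.le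
          linarith
      _ = a * Real.log (a / b) := by rw [h1]; ring

lemma sum_fiber {T Z : Type*} [Fintype T] [Fintype Z] [DecidableEq Z] (φ : T → Z) (F : T → ℝ) :
    ∑ z, ∑ t, (if φ t = z then F t else 0) = ∑ t, F t := by
  rw [Finset.sum_comm]
  simp [Finset.sum_ite_eq]

lemma cmi_lift_nonneg {T Z X : Type*} [Fintype T] [Fintype Z] [Fintype X] [DecidableEq Z]
    (φ : T → Z) (f : T → X → ℝ) (hf : ∀ t x, 0 ≤ f t x) :
    0 ≤ cmi (fun x t z => if φ t = z then f t x else 0) := by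
  classical
  unfold cmi
  apply Finset.sum_nonneg
  intro z _
  simp only
  have hif : ∀ (t : T) (x : X), 0 ≤ (if φ t = z then f t x else 0) := by
    intro t x; by_cases h : φ t = z <;> simp [h, hf t x]
  set S : ℝ := ∑ x', ∑ t', (if φ t' = z then f t' x' else 0) with hS
  have hS0 : 0 ≤ S := Finset.sum_nonneg fun x _ => Finset.sum_nonneg fun t _ => hif t x
  by_cases hSz : S = 0
  · -- all entries are zero
    have hzero : ∀ t x, (if φ t = z then f t x else 0) = 0 := by
      intro t x
      have hsum0 : (∑ x', ∑ t', (if φ t' = z then f t' x' else 0)) = 0 := by rw [← hS]; exact hSz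
      have h2 := (Finset.sum_eq_zero_iff_of_nonneg
        (fun x' _ => Finset.sum_nonneg fun t' _ => hif t' x')).mp hsum0 x (Finset.mem_univ x)
      exact (Finset.sum_eq_zero_iff_of_nonneg (fun t' _ => hif t' x)).mp h2 t (Finset.mem_univ t)
    apply le_of_eq; symm
    refine Finset.sum_eq_zero fun x _ => Finset.sum_eq_zero fun t _ => ?_
    rw [hzero t x]; ring
  · have hSpos : 0 < S := hS0.lt_of_ne (Ne.symm hSz)
    have key : ∀ x t,
        (if φ t = z then f t x else 0) -
          (∑ t', (if φ t' = z then f t' x else 0)) * (∑ x', (if φ t = z then f t x' else 0)) / S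
        ≤ (if φ t = z then f t x else 0) *
            Real.log ((if φ t = z then f t x else 0) * S /
              ((∑ t', (if φ t' = z then f t' x else 0)) * (∑ x', (if φ t = z then f t x' else 0)))) := by
      intro x t
      set a : ℝ := (if φ t = z then f t x else 0) with ha
      set B : ℝ := ∑ t', (if φ t' = z then f t' x else 0) with hB
      set A : ℝ := ∑ x', (if φ t = z then f t x' else 0) with hA
      have ha0 : 0 ≤ a := hif t x
      have hB0 : 0 ≤ B := Finset.sum_nonneg fun t' _ => hif t' x
      have hA0 : 0 ≤ A := Finset.sum_nonneg fun x' _ => hif t x'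
      have hb0 : 0 ≤ B * A / S := by positivity
      have hrw : a * S / (B * A) = a / (B * A / S) := by
        rw [div_div_eq_mul_div]
      rw [hrw]
      apply kl_term_ge a (B * A / S) ha0 hb0
      intro hane
      have hapos : 0 < a := ha0.lt_of_ne (Ne.symm hane)
      have hBa : a ≤ B := by
        rw [hB, ha]
        exact Finset.single_le_sum (f := fun t' => if φ t' = z then f t' x else 0)
          (fun i _ => hif i x) (Finset.mem_univ t)
      have hAa : a ≤ A := by
        rw [hA, ha]
        exact Finset.single_le_sum (f := fun x' => if φ t = z then f t x' else 0)
          (fun i _ => hif t i) (Finset.mem_univ x)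
      have : 0 < B * A / S :=
        div_pos (mul_pos (lt_of_lt_of_le hapos hBa) (lt_of_lt_of_le hapos hAa)) hSpos
      exact this.ne'
    have sumB : ∑ x, ∑ t', (if φ t' = z then f t' x else 0) = S := hS.symm
    have sumA : ∑ t, ∑ x', (if φ t = z then f t x' else 0) = S := by
      rw [hS]; exact Finset.sum_comm
    have hb' : ∑ x, ∑ t, ((∑ t', (if φ t' = z then f t' x else 0)) *
        (∑ x', (if φ t = z then f t x' else 0)) / S) = S := by
      have h1 : ∀ x, ∑ t, ((∑ t', (if φ t' = z then f t' x else 0)) *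
          (∑ x', (if φ t = z then f t x' else 0)) / S) = ∑ t', (if φ t' = z then f t' x else 0) := by
        intro x
        rw [← Finset.sum_div, ← Finset.mul_sum, sumA]
        field_simp
      rw [Finset.sum_congr rfl fun x _ => h1 x]
    have hleft : ∑ x, ∑ t, ((if φ t = z then f t x else 0) -
        (∑ t', (if φ t' = z then f t' x else 0)) * (∑ x', (if φ t = z then f t x' else 0)) / S) = 0 := by
      simp only [Finset.sum_sub_distrib]
      rw [← hS, hb']
      ring
    have hstep := Finset.sum_le_sum (s := Finset.univ)
      (fun x (_ : x ∈ Finset.univ) => Finset.sum_le_sum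
        (fun t (_ : t ∈ Finset.univ) => key x t))
    calc (0:ℝ) = _ := hleft.symm
      _ ≤ _ := hstep

lemma mi_chain {T Z X : Type*} [Fintype T] [Fintype Z] [Fintype X] [DecidableEq Z]
    (φ : T → Z) (f : T → X → ℝ) (hf : ∀ t x, 0 ≤ f t x) :
    mi f = cmi (fun x t z => if φ t = z then f t x else 0)
      + mi (fun z x => ∑ t, if φ t = z then f t x else 0) := by
  classical
  have hif : ∀ (z : Z) (t : T) (x : X), 0 ≤ (if φ t = z then f t x else 0) := by
    intro z t x; by_cases h : φ t = z <;> simp [h, hf t x]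
  -- Step A : rewrite the cmi term
  have hc : cmi (fun x t z => if φ t = z then f t x else 0)
      = ∑ t, ∑ x, f t x * Real.log (f t x * (∑ x', ∑ t', if φ t' = φ t then f t' x' else 0)
          / ((∑ t', if φ t' = φ t then f t' x else 0) * (∑ x', f t x'))) := by
    simp only [cmi]
    rw [Finset.sum_comm]
    rw [Finset.sum_congr rfl (fun (x : X) _ => Finset.sum_comm)]
    rw [Finset.sum_comm]
    refine Finset.sum_congr rfl fun t _ => Finset.sum_congr rfl fun x _ => ?_
    have h1 : ∀ z, ((if φ t = z then f t x else 0) *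
          Real.log ((if φ t = z then f t x else 0) * (∑ x', ∑ t', if φ t' = z then f t' x' else 0) /
            ((∑ t', if φ t' = z then f t' x else 0) * (∑ x', if φ t = z then f t x' else 0))))
        = (if φ t = z then f t x * Real.log (f t x * (∑ x', ∑ t', if φ t' = z then f t' x' else 0) /
            ((∑ t', if φ t' = z then f t' x else 0) * (∑ x', f t x'))) else 0) := by
      intro z; by_cases h : φ t = z <;> simp [h]
    rw [Finset.sum_congr rfl fun z _ => h1 z, Finset.sum_ite_eq]
    simp only [Finset.mem_univ, if_true]
  -- Step B : rewrite the lumped mi term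
  have hg : mi (fun z x => ∑ t, if φ t = z then f t x else 0)
      = ∑ t, ∑ x, f t x * Real.log ((∑ t', if φ t' = φ t then f t' x else 0) /
          ((∑ x', ∑ t', if φ t' = φ t then f t' x' else 0) *
            (∑ z', ∑ t', if φ t' = z' then f t' x else 0))) := by
    simp only [mi]
    have h2 : ∀ (z : Z) (x : X), (∑ t, if φ t = z then f t x else 0) *
          Real.log ((∑ t, if φ t = z then f t x else 0) /
            ((∑ x', ∑ t', if φ t' = z then f t' x' else 0) *
              (∑ z', ∑ t', if φ t' = z' then f t' x else 0)))
        = ∑ t, (if φ t = z then f t x *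
            Real.log ((∑ t', if φ t' = z then f t' x else 0) /
              ((∑ x', ∑ t', if φ t' = z then f t' x' else 0) *
                (∑ z', ∑ t', if φ t' = z' then f t' x else 0))) else 0) := by
      intro z x
      rw [Finset.sum_mul]
      refine Finset.sum_congr rfl fun t _ => ?_
      by_cases h : φ t = z <;> simp [h]
    rw [Finset.sum_congr rfl fun z _ => Finset.sum_congr rfl fun x _ => h2 z x]
    rw [Finset.sum_comm]
    rw [Finset.sum_congr rfl (fun (x : X) _ => Finset.sum_comm)]
    rw [Finset.sum_comm]
    refine Finset.sum_congr rfl fun t _ => Finset.sum_congr rfl fun x _ => ?_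
    rw [Finset.sum_ite_eq]
    simp only [Finset.mem_univ, if_true]
  rw [hc, hg]
  simp only [mi]
  rw [← Finset.sum_add_distrib]
  refine Finset.sum_congr rfl fun t _ => ?_
  rw [← Finset.sum_add_distrib]
  refine Finset.sum_congr rfl fun x _ => ?_
  by_cases hfz : f t x = 0
  · simp [hfz]
  · have hfpos : 0 < f t x := (hf t x).lt_of_ne (Ne.symm hfz)
    have hrow : f t x ≤ ∑ x', f t x' :=
      Finset.single_le_sum (f := fun x' => f t x') (fun i _ => hf t i) (Finset.mem_univ x)
    have hcolle : f t x ≤ ∑ t', f t' x :=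
      Finset.single_le_sum (f := fun t' => f t' x) (fun i _ => hf i x) (Finset.mem_univ t)
    have hGle : f t x ≤ ∑ t', if φ t' = φ t then f t' x else 0 := by
      have := Finset.single_le_sum (f := fun t' => if φ t' = φ t then f t' x else 0)
        (fun i _ => hif (φ t) i x) (Finset.mem_univ t)
      simpa using this
    have hQle : (∑ t', if φ t' = φ t then f t' x else 0)
        ≤ ∑ x', ∑ t', if φ t' = φ t then f t' x' else 0 :=
      Finset.single_le_sum (f := fun x' => ∑ t', if φ t' = φ t then f t' x' else 0)
        (fun i _ => Finset.sum_nonneg fun t' _ => hif (φ t) t' i) (Finset.mem_univ x)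
    have hrowpos : 0 < ∑ x', f t x' := lt_of_lt_of_le hfpos hrow
    have hcolpos : 0 < ∑ t', f t' x := lt_of_lt_of_le hfpos hcolle
    have hGpos : 0 < ∑ t', if φ t' = φ t then f t' x else 0 := lt_of_lt_of_le hfpos hGle
    have hQpos : 0 < ∑ x', ∑ t', if φ t' = φ t then f t' x' else 0 := lt_of_lt_of_le hGpos hQle
    have hcol : (∑ z', ∑ t', if φ t' = z' then f t' x else 0) = ∑ t', f t' x :=
      sum_fiber φ (fun t' => f t' x)
    rw [hcol, ← mul_add]
    congr 1
    rw [← Real.log_mul (by positivity) (by positivity)]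
    congr 1
    field_simp

lemma mi_eq_of {A B : Type*} [Fintype A] [Fintype B] (q : A → B → ℝ) (R : A → ℝ) (Cl : B → ℝ)
    (hR : ∀ a, ∑ b, q a b = R a) (hC : ∀ b, ∑ a, q a b = Cl b) :
    mi q = ∑ a, ∑ b, q a b * Real.log (q a b / (R a * Cl b)) := by
  simp only [mi]
  refine Finset.sum_congr rfl fun a _ => Finset.sum_congr rfl fun b _ => ?_
  rw [hR, hC]

lemma mi_lumped {T Z X : Type*} [Fintype T] [Fintype Z] [Fintype X] [DecidableEq Z]
    (φ : T → Z) (f : T → X → ℝ) (hf : ∀ t x, 0 ≤ f t x) (u : X → ℝ) :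
    mi (fun t x => (∑ x', f t x') *
        (if (∑ t', if φ t' = φ t then (∑ x', f t' x') else 0) = 0 then u x
         else (∑ t', if φ t' = φ t then f t' x else 0) /
           (∑ t', if φ t' = φ t then (∑ x', f t' x') else 0)))
      = mi (fun z x => ∑ t, if φ t = z then f t x else 0) := by
  classical
  set G : Z → X → ℝ := fun z x => ∑ t, if φ t = z then f t x else 0 with hGdef
  set row : T → ℝ := fun t => ∑ x', f t x' with hrowdef
  set Q : Z → ℝ := fun z => ∑ t, if φ t = z then row t else 0 with hQdef
  have hrow0 : ∀ t, 0 ≤ row t := fun t => Finset.sum_nonneg fun x _ => hf t x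
  have hifrow : ∀ (z : Z) (t : T), 0 ≤ (if φ t = z then row t else 0) := by
    intro z t; by_cases h : φ t = z <;> simp [h, hrow0 t]
  have hiff : ∀ (z : Z) (t : T) (x : X), 0 ≤ (if φ t = z then f t x else 0) := by
    intro z t x; by_cases h : φ t = z <;> simp [h, hf t x]
  have hG0 : ∀ z x, 0 ≤ G z x := fun z x => Finset.sum_nonneg fun t _ => hiff z t x
  have hQ0 : ∀ z, 0 ≤ Q z := fun z => Finset.sum_nonneg fun t _ => hifrow z t
  have hGQ : ∀ z, ∑ x, G z x = Q z := by
    intro z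
    simp only [hGdef, hQdef]
    rw [Finset.sum_comm]
    refine Finset.sum_congr rfl fun t _ => ?_
    by_cases h : φ t = z <;> simp [h, hrowdef]
  have hrowle : ∀ t, row t ≤ Q (φ t) := by
    intro t
    have := Finset.single_le_sum (f := fun t' => if φ t' = φ t then row t' else 0)
      (fun i _ => hifrow (φ t) i) (Finset.mem_univ t)
    simpa [hQdef] using this
  have hQzrow : ∀ t, Q (φ t) = 0 → row t = 0 :=
    fun t h => le_antisymm (h ▸ hrowle t) (hrow0 t)
  have hQzrow' : ∀ z t, Q z = 0 → φ t = z → row t = 0 := by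
    intro z t h htz; exact hQzrow t (by rw [htz]; exact h)
  have hGzero : ∀ z x, Q z = 0 → G z x = 0 := by
    intro z x h
    refine le_antisymm ?_ (hG0 z x)
    calc G z x ≤ ∑ x', G z x' :=
          Finset.single_le_sum (f := fun x' => G z x') (fun i _ => hG0 z i) (Finset.mem_univ x)
      _ = Q z := hGQ z
      _ = 0 := h
  set F : T → X → ℝ := fun t x => row t * (if Q (φ t) = 0 then u x else G (φ t) x / Q (φ t))
    with hFdef
  have hrow' : ∀ t, ∑ x, F t x = row t := by
    intro t
    simp only [hFdef]
    by_cases h : Q (φ t) = 0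
    · simp [h, hQzrow t h]
    · simp only [if_neg h]
      rw [← Finset.mul_sum, ← Finset.sum_div, hGQ (φ t), div_self h, mul_one]
  have hcol' : ∀ x, ∑ t, F t x = ∑ z, G z x := by
    intro x
    rw [← sum_fiber φ (fun t => F t x)]
    refine Finset.sum_congr rfl fun z _ => ?_
    by_cases h : Q z = 0
    · rw [hGzero z x h]
      refine Finset.sum_eq_zero fun t _ => ?_
      by_cases htz : φ t = z
      · simp [htz, hFdef, hQzrow' z t h htz]
      · simp [htz]
    · have h1 : ∀ t, (if φ t = z then F t x else 0)
          = (if φ t = z then row t else 0) * (G z x / Q z) := by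
        intro t
        by_cases htz : φ t = z
        · simp only [htz, if_true, hFdef]
          rw [if_neg h]
        · simp [htz]
      rw [Finset.sum_congr rfl fun t _ => h1 t, ← Finset.sum_mul]
      have hq : (∑ t, if φ t = z then row t else 0) = Q z := by simp [hQdef]
      rw [hq, mul_comm]
      exact div_mul_cancel₀ _ h
  rw [mi_eq_of F row (fun x => ∑ z, G z x) hrow' hcol',
      mi_eq_of G Q (fun x => ∑ z, G z x) hGQ (fun x => rfl)]
  rw [Finset.sum_comm]
  rw [Finset.sum_congr rfl (fun (x : X) _ =>
    (sum_fiber φ (fun t => F t x * Real.log (F t x / (row t * ∑ z, G z x)))).symm)]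
  rw [Finset.sum_comm]
  refine Finset.sum_congr rfl fun z _ => Finset.sum_congr rfl fun x _ => ?_
  by_cases h : Q z = 0
  · rw [hGzero z x h]
    rw [Finset.sum_eq_zero, zero_mul]
    intro t _
    by_cases htz : φ t = z
    · have hF0 : F t x = 0 := by
        simp [hFdef, hQzrow' z t h htz]
      simp [htz, hF0]
    · simp [htz]
  · have h1 : ∀ t, (if φ t = z then F t x * Real.log (F t x / (row t * ∑ z', G z' x)) else 0)
        = (if φ t = z then row t else 0) *
            ((G z x / Q z) * Real.log (G z x / (Q z * ∑ z', G z' x))) := by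
      intro t
      by_cases htz : φ t = z
      · simp only [htz, if_true, hFdef]
        rw [if_neg h]
        by_cases hr : row t = 0
        · simp [hr]
        · rw [mul_div_mul_left _ _ hr, div_div]
          ring
      · simp [htz]
    rw [Finset.sum_congr rfl fun t _ => h1 t, ← Finset.sum_mul]
    have hq : (∑ t, if φ t = z then row t else 0) = Q z := by simp [hQdef]
    rw [hq, ← mul_assoc]
    have : Q z * (G z x / Q z) = G z x := by field_simp
    rw [this]

/-- Minimiser rigidity: if `φ` is sufficient for `C` given `T`
and the encoder `e` attains the minimum of `I(X;T) − β·I(X;C)` over IB-feasible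
encoders for some `β ≥ 0`, then `I(X;T ∣ φ(T)) = 0`, i.e. `p(x∣t)` depends on `t`
only through `φ(t)` almost everywhere. -/
theorem stmt12 {T C Z X : Type*} [Fintype T] [Fintype C] [Fintype Z] [DecidableEq Z]
    [Fintype X] [Nonempty X]
    (φ : T → Z) (p : T → C → ℝ) (β : ℝ) (hβ : 0 ≤ β)
    (hpos : ∀ t c, 0 ≤ p t c)
    (hsum : ∑ t, ∑ c, p t c = 1)
    (hsuff : CondIndep (fun c t z => if φ t = z then p t c else 0))
    (e : T → X → ℝ) (he : IsKernel e)
    (hopt : ∀ e' : T → X → ℝ, IsKernel e' → fullLag p β e ≤ fullLag p β e') :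
    cmi (fun x t z => if φ t = z then (∑ c, p t c) * e t x else 0) = 0 := by
  classical
  obtain ⟨he0, he1⟩ := he
  have hw0 : ∀ t, 0 ≤ ∑ c, p t c := fun t => Finset.sum_nonneg fun c _ => hpos t c
  have hf0 : ∀ t x, 0 ≤ (∑ c, p t c) * e t x := fun t x => mul_nonneg (hw0 t) (he0 t x)
  have hrowsum : ∀ t, (∑ x', (∑ c, p t c) * e t x') = ∑ c, p t c := by
    intro t; rw [← Finset.mul_sum, he1 t, mul_one]
  -- notation shortcuts (just hypotheses, everything stays raw)
  have hifw : ∀ (z : Z) (t : T), 0 ≤ (if φ t = z then (∑ c, p t c) else 0) := by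
    intro z t; by_cases h : φ t = z <;> simp [h, hw0 t]
  have hD0 : ∀ z : Z, 0 ≤ ∑ t', if φ t' = z then (∑ c, p t' c) else 0 :=
    fun z => Finset.sum_nonneg fun t _ => hifw z t
  -- the lumped encoder
  set e' : T → X → ℝ := fun t x =>
    if (∑ t', if φ t' = φ t then (∑ c, p t' c) else 0) = 0 then (Fintype.card X : ℝ)⁻¹
    else (∑ t', if φ t' = φ t then (∑ c, p t' c) * e t' x else 0) /
      (∑ t', if φ t' = φ t then (∑ c, p t' c) else 0) with he'def
  have hcardX : ((Fintype.card X : ℝ)) ≠ 0 := by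
    exact_mod_cast Fintype.card_ne_zero
  -- e' is a kernel
  have hkernel : IsKernel e' := by
    constructor
    · intro t x
      simp only [he'def]
      by_cases h : (∑ t', if φ t' = φ t then (∑ c, p t' c) else 0) = 0
      · rw [if_pos h]; positivity
      · rw [if_neg h]
        apply div_nonneg _ (hD0 (φ t))
        exact Finset.sum_nonneg fun t' _ => by
          by_cases h' : φ t' = φ t <;> simp [h', hf0 t' x]
    · intro t
      simp only [he'def]
      by_cases h : (∑ t', if φ t' = φ t then (∑ c, p t' c) else 0) = 0
      · simp only [if_pos h]
        rw [Finset.sum_const, Finset.card_univ, nsmul_eq_mul, mul_inv_cancel₀ hcardX]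
      · simp only [if_neg h]
        rw [← Finset.sum_div]
        rw [show (∑ x, ∑ t', if φ t' = φ t then (∑ c, p t' c) * e t' x else 0)
            = ∑ t', if φ t' = φ t then (∑ c, p t' c) else 0 from ?_]
        · exact div_self h
        · rw [Finset.sum_comm]
          refine Finset.sum_congr rfl fun t' _ => ?_
          by_cases h' : φ t' = φ t <;> simp [h', hrowsum t']
  -- sufficiency in usable form
  have hkey : ∀ t c, p t c * (∑ t', if φ t' = φ t then (∑ c', p t' c') else 0)
      = (∑ t', if φ t' = φ t then p t' c else 0) * (∑ c', p t c') := by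
    intro t c
    have h := hsuff c t (φ t)
    simp only [if_pos rfl] at h
    rw [show (∑ c', ∑ t', if φ t' = φ t then p t' c' else 0)
        = ∑ t', if φ t' = φ t then (∑ c', p t' c') else 0 from ?_] at h
    · exact h
    · rw [Finset.sum_comm]
      refine Finset.sum_congr rfl fun t' _ => ?_
      by_cases h' : φ t' = φ t <;> simp [h']
  have hkey' : ∀ (z : Z) t c, φ t = z →
      p t c * (∑ t', if φ t' = z then (∑ c', p t' c') else 0)
        = (∑ t', if φ t' = z then p t' c else 0) * (∑ c', p t c') := by
    intro z t c htz
    have := hkey t c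
    rw [htz] at this
    exact this
  -- the induced (C,X) joints agree
  have hI2 : ∀ (c : C) (x : X), ∑ t, p t c * e' t x = ∑ t, p t c * e t x := by
    intro c x
    rw [← sum_fiber φ (fun t => p t c * e' t x), ← sum_fiber φ (fun t => p t c * e t x)]
    refine Finset.sum_congr rfl fun z _ => ?_
    by_cases hz : (∑ t', if φ t' = z then (∑ c', p t' c') else 0) = 0
    · have hpz : ∀ t, φ t = z → p t c = 0 := by
        intro t htz
        have h1 := (Finset.sum_eq_zero_iff_of_nonneg
          (fun t' _ => hifw z t')).mp hz t (Finset.mem_univ t)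
        rw [if_pos htz] at h1
        have : p t c ≤ ∑ c', p t c' :=
          Finset.single_le_sum (f := fun c' => p t c') (fun i _ => hpos t i) (Finset.mem_univ c)
        have h2 : (∑ c', p t c') = 0 := h1
        exact le_antisymm (h2 ▸ this) (hpos t c)
      refine Finset.sum_congr rfl fun t _ => ?_
      by_cases htz : φ t = z
      · simp [htz, hpz t htz]
      · simp [htz]
    · have hE : ∀ t, φ t = z → e' t x
          = (∑ t', if φ t' = z then (∑ c', p t' c') * e t' x else 0) /
            (∑ t', if φ t' = z then (∑ c', p t' c') else 0) := by
        intro t htz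
        simp only [he'def, htz, if_neg hz]
      have hL : (∑ t, if φ t = z then p t c * e' t x else 0)
          = (∑ t', if φ t' = z then p t' c else 0) *
            ((∑ t', if φ t' = z then (∑ c', p t' c') * e t' x else 0) /
              (∑ t', if φ t' = z then (∑ c', p t' c') else 0)) := by
        have hterm : ∀ t, (if φ t = z then p t c * e' t x else 0)
            = (if φ t = z then p t c else 0) *
              ((∑ t', if φ t' = z then (∑ c', p t' c') * e t' x else 0) /
                (∑ t', if φ t' = z then (∑ c', p t' c') else 0)) := by
          intro t
          by_cases htz : φ t = z
          · rw [if_pos htz, if_pos htz, hE t htz]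
          · simp [htz]
        rw [Finset.sum_congr rfl fun t _ => hterm t, ← Finset.sum_mul]
      have hR : (∑ t', if φ t' = z then (∑ c', p t' c') else 0) *
            (∑ t, if φ t = z then p t c * e t x else 0)
          = (∑ t', if φ t' = z then p t' c else 0) *
            (∑ t', if φ t' = z then (∑ c', p t' c') * e t' x else 0) := by
        rw [Finset.mul_sum, Finset.mul_sum]
        refine Finset.sum_congr rfl fun t _ => ?_
        by_cases htz : φ t = z
        · simp only [if_pos htz]
          have hk := hkey' z t c htz
          calc (∑ t', if φ t' = z then (∑ c', p t' c') else 0) * (p t c * e t x)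
              = (p t c * (∑ t', if φ t' = z then (∑ c', p t' c') else 0)) * e t x := by ring
            _ = ((∑ t', if φ t' = z then p t' c else 0) * (∑ c', p t c')) * e t x := by rw [hk]
            _ = (∑ t', if φ t' = z then p t' c else 0) * ((∑ c', p t c') * e t x) := by ring
        · simp [htz]
      rw [hL, ← mul_div_assoc, div_eq_iff hz]
      linear_combination -hR
  -- compare the two Lagrangians
  have hopt' := hopt e' hkernel
  unfold fullLag at hopt'
  have hIC : (fun c x => ∑ t, p t c * e' t x) = (fun c x => ∑ t, p t c * e t x) := by
    funext c x; exact hI2 c x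
  rw [hIC] at hopt'
  have hmile : mi (fun t x => (∑ c, p t c) * e t x) ≤ mi (fun t x => (∑ c, p t c) * e' t x) := by
    linarith
  -- identify mi of the lumped encoder with mi of the pushforward
  have hmi' : mi (fun t x => (∑ c, p t c) * e' t x)
      = mi (fun z x => ∑ t, if φ t = z then (∑ c, p t c) * e t x else 0) := by
    rw [← mi_lumped φ (fun t x => (∑ c, p t c) * e t x) hf0 (fun _ => (Fintype.card X : ℝ)⁻¹)]
    congr 1
    funext t x
    simp only [he'def, hrowsum]
  have hchain : mi (fun t x => (∑ c, p t c) * e t x)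
      = cmi (fun x t z => if φ t = z then (∑ c, p t c) * e t x else 0)
        + mi (fun z x => ∑ t, if φ t = z then (∑ c, p t c) * e t x else 0) :=
    mi_chain φ _ hf0
  have hnn : 0 ≤ cmi (fun x t z => if φ t = z then (∑ c, p t c) * e t x else 0) :=
    cmi_lift_nonneg φ _ hf0
  linarith [hmi' ▸ hmile]
end
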